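/- Let X be a Hermitian d×d matrix and P an orthogonal projection such that ‖X‖_{S1} ≤ 1, Tr(X⁻) ≤ δ, and Tr(PX) ≥ ‖X‖_{S1} − δ for some 0 ≤ δ ≤ 1. Then ‖PXP − X‖_{S1} ≤ C√δ for a universal constant C. -/

import Mathlib

open Matrix ComplexOrder

/-- The Frobenius norm of a complex square matrix: `(Tr(AᴴA))^{1/2}`. -/
noncomputable def frobNorm {d : ℕ} (A : Matrix (Fin d) (Fin d) ℂ) : ℝ :=
  Real.sqrt ((Aᴴ * A).trace.re)

/-- The Schatten-1 (nuclear) norm: the sum of singular values, i.e. `Tr((AᴴA)^{1/2})`. -/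
noncomputable def nucNorm {d : ℕ} (A : Matrix (Fin d) (Fin d) ℂ) : ℝ :=
  ((((Matrix.posSemidef_conjTranspose_mul_self A).1.eigenvectorUnitary : Matrix (Fin d) (Fin d) ℂ) *
      Matrix.diagonal (fun i => ((Real.sqrt ((Matrix.posSemidef_conjTranspose_mul_self A).1.eigenvalues i) : ℝ) : ℂ)) *
      (star (Matrix.posSemidef_conjTranspose_mul_self A).1.eigenvectorUnitary :
        Matrix (Fin d) (Fin d) ℂ))).trace.re


/-- The positive part `X⁺` of a Hermitian matrix, via the spectral decomposition. -/
noncomputable def posPart {d : ℕ} {X : Matrix (Fin d) (Fin d) ℂ} (hX : X.IsHermitian) :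
    Matrix (Fin d) (Fin d) ℂ :=
  (hX.eigenvectorUnitary : Matrix (Fin d) (Fin d) ℂ) *
    Matrix.diagonal (fun i => ((max (hX.eigenvalues i) 0 : ℝ) : ℂ)) *
    (hX.eigenvectorUnitary : Matrix (Fin d) (Fin d) ℂ)ᴴ

/-- The negative part `X⁻` of a Hermitian matrix, via the spectral decomposition,
so that `X = X⁺ - X⁻`. -/
noncomputable def negPart {d : ℕ} {X : Matrix (Fin d) (Fin d) ℂ} (hX : X.IsHermitian) :
    Matrix (Fin d) (Fin d) ℂ :=
  (hX.eigenvectorUnitary : Matrix (Fin d) (Fin d) ℂ) *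
    Matrix.diagonal (fun i => ((max (-hX.eigenvalues i) 0 : ℝ) : ℂ)) *
    (hX.eigenvectorUnitary : Matrix (Fin d) (Fin d) ℂ)ᴴ

section Aux

variable {d : ℕ} {X : Matrix (Fin d) (Fin d) ℂ} (hX : X.IsHermitian)

/-- Conjugation of a real diagonal matrix by the eigenvector unitary of `hX`. -/
noncomputable def conjDiag (c : Fin d → ℝ) : Matrix (Fin d) (Fin d) ℂ :=
  (hX.eigenvectorUnitary : Matrix (Fin d) (Fin d) ℂ) *
    Matrix.diagonal (fun i => ((c i : ℝ) : ℂ)) *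
    (hX.eigenvectorUnitary : Matrix (Fin d) (Fin d) ℂ)ᴴ

lemma star_mul_self_eigen : (hX.eigenvectorUnitary : Matrix (Fin d) (Fin d) ℂ)ᴴ *
      (hX.eigenvectorUnitary : Matrix (Fin d) (Fin d) ℂ) = 1 := by
  simpa [star] using (Matrix.mem_unitaryGroup_iff').mp hX.eigenvectorUnitary.2

lemma mul_star_self_eigen : (hX.eigenvectorUnitary : Matrix (Fin d) (Fin d) ℂ) *
      (hX.eigenvectorUnitary : Matrix (Fin d) (Fin d) ℂ)ᴴ = 1 := by
  simpa [star] using (Matrix.mem_unitaryGroup_iff).mp hX.eigenvectorUnitary.2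

lemma conjDiag_mul (c c' : Fin d → ℝ) :
    conjDiag hX c * conjDiag hX c' = conjDiag hX (fun i => c i * c' i) := by
  unfold conjDiag
  simp only [← Matrix.mul_assoc]
  rw [Matrix.mul_assoc (_ * _) _ (hX.eigenvectorUnitary : Matrix (Fin d) (Fin d) ℂ),
    star_mul_self_eigen, Matrix.mul_one,
    Matrix.mul_assoc (hX.eigenvectorUnitary : Matrix (Fin d) (Fin d) ℂ),
    Matrix.diagonal_mul_diagonal]
  norm_cast

lemma conjDiag_conjTranspose (c : Fin d → ℝ) : (conjDiag hX c)ᴴ = conjDiag hX c := by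
  unfold conjDiag
  simp only [Matrix.conjTranspose_mul, Matrix.conjTranspose_conjTranspose,
    Matrix.diagonal_conjTranspose, ← Matrix.mul_assoc]
  have : (star fun i => ((c i : ℝ) : ℂ)) = fun i => ((c i : ℝ) : ℂ) :=
    funext fun i => Complex.conj_ofReal _
  rw [this]

lemma conjDiag_isHermitian (c : Fin d → ℝ) : (conjDiag hX c).IsHermitian :=
  conjDiag_conjTranspose hX c

lemma conjDiag_trace (c : Fin d → ℝ) : (conjDiag hX c).trace = ∑ i, (c i : ℂ) := by
  unfold conjDiag
  rw [Matrix.trace_mul_cycle, star_mul_self_eigen, Matrix.one_mul, Matrix.trace_diagonal]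

lemma conjDiag_trace_re (c : Fin d → ℝ) : (conjDiag hX c).trace.re = ∑ i, c i := by
  rw [conjDiag_trace, Complex.re_sum]
  norm_num

lemma conjDiag_one : conjDiag hX (fun _ => 1) = 1 := by
  unfold conjDiag
  have : Matrix.diagonal (fun _ : Fin d => ((1 : ℝ) : ℂ)) = 1 := by
    norm_num [Matrix.diagonal_one]
  rw [this, Matrix.mul_one, mul_star_self_eigen]

lemma conjDiag_posSemidef {c : Fin d → ℝ} (hc : ∀ i, 0 ≤ c i) :
    (conjDiag hX c).PosSemidef := by
  apply Matrix.PosSemidef.mul_mul_conjTranspose_same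
  rw [Matrix.posSemidef_diagonal_iff]
  intro i
  rw [← Complex.ofReal_zero, Complex.real_le_real]
  exact hc i

lemma X_eq_conjDiag : X = conjDiag hX (hX.eigenvalues) := hX.spectral_theorem

noncomputable def nucAux (B : Matrix (Fin d) (Fin d) ℂ) (hB : B.IsHermitian) : ℝ :=
  (((hB.eigenvectorUnitary : Matrix (Fin d) (Fin d) ℂ) *
      Matrix.diagonal (fun i => ((Real.sqrt (hB.eigenvalues i) : ℝ) : ℂ)) *
      (star hB.eigenvectorUnitary : Matrix (Fin d) (Fin d) ℂ))).trace.re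

lemma nucAux_congr {B B' : Matrix (Fin d) (Fin d) ℂ} (h : B = B') (hB : B.IsHermitian)
    (hB' : B'.IsHermitian) : nucAux B hB = nucAux B' hB' := by subst h; rfl

lemma nucAux_eq_cfc (B : Matrix (Fin d) (Fin d) ℂ) (hB : B.IsHermitian) :
    nucAux B hB = (cfc Real.sqrt B).trace.re := by
  rw [hB.cfc_eq]; rfl

lemma nucNorm_hermitian : nucNorm X = ∑ i, |hX.eigenvalues i| := by
  have h1 : nucNorm X = nucAux (Xᴴ * X) (Matrix.posSemidef_conjTranspose_mul_self X).1 := rfl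
  rw [h1, nucAux_eq_cfc, hX.eq, ← pow_two, ← cfc_pow_id (R := ℝ) X 2 hX.isSelfAdjoint,
    ← cfc_comp Real.sqrt _ X]
  have h2 : (Real.sqrt ∘ fun x : ℝ => x ^ 2) = fun x => |x| :=
    funext fun x => Real.sqrt_sq_eq_abs x
  rw [h2, hX.cfc_eq]
  have h3 : hX.cfc (fun x => |x|) = conjDiag hX (fun i => |hX.eigenvalues i|) := rfl
  rw [h3, conjDiag_trace_re]

lemma nucNorm_psd {A : Matrix (Fin d) (Fin d) ℂ} (hA : A.PosSemidef) :
    nucNorm A = A.trace.re := by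
  rw [nucNorm_hermitian hA.1, hA.1.trace_eq_sum_eigenvalues, Complex.re_sum]
  refine Finset.sum_congr rfl fun i _ => ?_
  rw [abs_of_nonneg (hA.eigenvalues_nonneg i)]; simp

lemma nucNorm_neg (A : Matrix (Fin d) (Fin d) ℂ) : nucNorm (-A) = nucNorm A := by
  show nucAux _ _ = nucAux _ _
  exact nucAux_congr (by simp) _ _

lemma posPart_eq : posPart hX = conjDiag hX (fun i => max (hX.eigenvalues i) 0) := rfl

lemma negPart_eq : negPart hX = conjDiag hX (fun i => max (-hX.eigenvalues i) 0) := rfl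

lemma conjDiag_sub (c c' : Fin d → ℝ) :
    conjDiag hX c - conjDiag hX c' = conjDiag hX (fun i => c i - c' i) := by
  unfold conjDiag
  rw [← Matrix.sub_mul, ← Matrix.mul_sub, Matrix.diagonal_sub]
  norm_cast

lemma X_decomp : X = posPart hX - negPart hX := by
  rw [posPart_eq, negPart_eq, conjDiag_sub]
  have : (fun i => max (hX.eigenvalues i) 0 - max (-hX.eigenvalues i) 0) = hX.eigenvalues :=
    funext fun i => max_zero_sub_max_neg_zero_eq_self _
  rw [this]
  exact X_eq_conjDiag hX

lemma nucNorm_X_split : nucNorm X = (posPart hX).trace.re + (negPart hX).trace.re := by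
  rw [nucNorm_hermitian hX, posPart_eq, negPart_eq, conjDiag_trace_re, conjDiag_trace_re,
    ← Finset.sum_add_distrib]
  refine Finset.sum_congr rfl fun i _ => ?_
  rcases le_total (hX.eigenvalues i) 0 with h | h
  · rw [abs_of_nonpos h, max_eq_right h, max_eq_left (by linarith), zero_add]
  · rw [abs_of_nonneg h, max_eq_left h, max_eq_right (by linarith), add_zero]

end Aux

section Frob

noncomputable def frobSq {d : ℕ} (A : Matrix (Fin d) (Fin d) ℂ) : ℝ := ((Aᴴ * A).trace).re

lemma trace_conjTranspose_mul {d : ℕ} (A B : Matrix (Fin d) (Fin d) ℂ) :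
    (Aᴴ * B).trace = ∑ p : Fin d × Fin d, (starRingEnd ℂ) (A p.1 p.2) * B p.1 p.2 := by
  rw [← Finset.univ_product_univ, Finset.sum_product]
  rw [Matrix.trace]
  simp only [Matrix.diag_apply, Matrix.mul_apply, Matrix.conjTranspose_apply]
  rw [Finset.sum_comm]
  rfl

lemma frobSq_eq {d : ℕ} (A : Matrix (Fin d) (Fin d) ℂ) :
    frobSq A = ∑ p : Fin d × Fin d, ‖A p.1 p.2‖ ^ 2 := by
  unfold frobSq
  rw [trace_conjTranspose_mul, Complex.re_sum]
  congr 1; ext p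
  rw [Complex.conj_mul']
  norm_cast

lemma frobSq_nonneg {d : ℕ} (A : Matrix (Fin d) (Fin d) ℂ) : 0 ≤ frobSq A := by
  rw [frobSq_eq]; positivity

lemma trace_CS {d : ℕ} (A B : Matrix (Fin d) (Fin d) ℂ) :
    |((Aᴴ * B).trace).re| ≤ Real.sqrt (frobSq A) * Real.sqrt (frobSq B) := by
  set f : EuclideanSpace ℂ (Fin d × Fin d) := WithLp.toLp 2 (fun p : Fin d × Fin d => A p.1 p.2) with hf
  set g : EuclideanSpace ℂ (Fin d × Fin d) := WithLp.toLp 2 (fun p : Fin d × Fin d => B p.1 p.2) with hg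
  have h1 : (Aᴴ * B).trace = inner (𝕜 := ℂ) f g := by
    rw [trace_conjTranspose_mul, PiLp.inner_apply]
    simp [RCLike.inner_apply, hf, hg, mul_comm]
  have h2 : ‖f‖ = Real.sqrt (frobSq A) := by rw [EuclideanSpace.norm_eq, frobSq_eq]
  have h3 : ‖g‖ = Real.sqrt (frobSq B) := by rw [EuclideanSpace.norm_eq, frobSq_eq]
  calc |((Aᴴ * B).trace).re| ≤ ‖(Aᴴ * B).trace‖ := Complex.abs_re_le_norm _
    _ = ‖inner (𝕜 := ℂ) f g‖ := by rw [h1]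
    _ ≤ ‖f‖ * ‖g‖ := norm_inner_le_norm f g
    _ = _ := by rw [h2, h3]

end Frob

section Unitary

variable {d : ℕ}

lemma re_trace_unitary_le {A W : Matrix (Fin d) (Fin d) ℂ} (hA : A.IsHermitian)
    (hW : W * Wᴴ = 1) : ((W * A).trace).re ≤ nucNorm A := by
  set U : Matrix (Fin d) (Fin d) ℂ := (hA.eigenvectorUnitary : Matrix (Fin d) (Fin d) ℂ) with hU
  set M := Uᴴ * W * U with hM
  have hMM : M * Mᴴ = 1 := by
    rw [hM]
    simp only [Matrix.conjTranspose_mul, Matrix.conjTranspose_conjTranspose, Matrix.mul_assoc]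
    rw [← Matrix.mul_assoc U Uᴴ, hU, mul_star_self_eigen hA, Matrix.one_mul,
      ← Matrix.mul_assoc W Wᴴ, hW, Matrix.one_mul, star_mul_self_eigen hA]
  have hMd : ∀ i, |(M i i).re| ≤ 1 := by
    intro i
    have h2 : (M * Mᴴ) i i = 1 := by rw [hMM]; simp [Matrix.one_apply]
    rw [Matrix.mul_apply] at h2
    have h3 : ∑ k, Complex.normSq (M i k) = 1 := by
      have h4 := congrArg Complex.re h2
      rw [Complex.re_sum] at h4
      simpa [Matrix.conjTranspose_apply, Complex.mul_conj] using h4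
    have h4 : Complex.normSq (M i i) ≤ 1 := by
      rw [← h3]
      exact Finset.single_le_sum (f := fun k => Complex.normSq (M i k))
        (fun k _ => Complex.normSq_nonneg _) (Finset.mem_univ i)
    have h5 : ‖M i i‖ ≤ 1 := by
      rw [Complex.norm_def, ← Real.sqrt_one]
      exact Real.sqrt_le_sqrt h4
    exact (Complex.abs_re_le_norm _).trans h5
  have htr : (W * A).trace = ∑ i, M i i * (hA.eigenvalues i : ℂ) := by
    conv_lhs => rhs; rw [X_eq_conjDiag hA]
    unfold conjDiag
    simp only [← Matrix.mul_assoc]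
    rw [Matrix.trace_mul_comm _ Uᴴ]
    simp only [← Matrix.mul_assoc]
    rw [Matrix.trace]
    simp only [Matrix.diag_apply, Matrix.mul_diagonal]
    rfl
  rw [nucNorm_hermitian hA, htr, Complex.re_sum]
  refine Finset.sum_le_sum fun i _ => ?_
  have : (M i i * (hA.eigenvalues i : ℂ)).re = (M i i).re * hA.eigenvalues i := by
    simp [Complex.mul_re]
  rw [this]
  calc (M i i).re * hA.eigenvalues i ≤ |(M i i).re * hA.eigenvalues i| := le_abs_self _
    _ = |(M i i).re| * |hA.eigenvalues i| := abs_mul _ _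
    _ ≤ 1 * |hA.eigenvalues i| := by
        exact mul_le_mul_of_nonneg_right (hMd i) (abs_nonneg _)
    _ = |hA.eigenvalues i| := one_mul _

lemma exists_sign_unitary {A : Matrix (Fin d) (Fin d) ℂ} (hA : A.IsHermitian) :
    ∃ W : Matrix (Fin d) (Fin d) ℂ, W * Wᴴ = 1 ∧ Wᴴ * W = 1 ∧
      nucNorm A = ((W * A).trace).re := by
  refine ⟨conjDiag hA (fun i => if 0 ≤ hA.eigenvalues i then 1 else -1), ?_, ?_, ?_⟩
  · rw [conjDiag_conjTranspose, conjDiag_mul]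
    have : (fun i => (if 0 ≤ hA.eigenvalues i then (1:ℝ) else -1) *
        (if 0 ≤ hA.eigenvalues i then 1 else -1)) = fun _ => 1 := by
      funext i; split <;> norm_num
    rw [this, conjDiag_one]
  · rw [conjDiag_conjTranspose, conjDiag_mul]
    have : (fun i => (if 0 ≤ hA.eigenvalues i then (1:ℝ) else -1) *
        (if 0 ≤ hA.eigenvalues i then 1 else -1)) = fun _ => 1 := by
      funext i; split <;> norm_num
    rw [this, conjDiag_one]
  · conv_lhs => rw [nucNorm_hermitian hA]
    have h2 : conjDiag hA (fun i => if 0 ≤ hA.eigenvalues i then 1 else -1) * A =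
        conjDiag hA (fun i => (if 0 ≤ hA.eigenvalues i then (1:ℝ) else -1) * hA.eigenvalues i) := by
      conv_lhs => rhs; rw [show A = conjDiag hA hA.eigenvalues from X_eq_conjDiag hA]
      rw [conjDiag_mul]
    rw [h2, conjDiag_trace_re]
    refine (Finset.sum_congr rfl fun i _ => ?_).symm
    rcases le_or_gt 0 (hA.eigenvalues i) with h | h
    · rw [if_pos h, one_mul, abs_of_nonneg h]
    · rw [if_neg (not_le.mpr h), abs_of_neg h]; ring

lemma nucNorm_add_le {A B : Matrix (Fin d) (Fin d) ℂ} (hA : A.IsHermitian)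
    (hB : B.IsHermitian) : nucNorm (A + B) ≤ nucNorm A + nucNorm B := by
  obtain ⟨W, hW1, hW2, hval⟩ := exists_sign_unitary (hA.add hB)
  rw [hval, Matrix.mul_add, Matrix.trace_add, Complex.add_re]
  exact add_le_add (re_trace_unitary_le hA hW1) (re_trace_unitary_le hB hW1)

end Unitary

section MainAux

variable {d : ℕ}

lemma proj_trace_frob {Q S : Matrix (Fin d) (Fin d) ℂ} (hQ : Qᴴ = Q) (hQQ : Q * Q = Q)
    (hS : Sᴴ = S) : ((Q * (S * S)).trace).re = frobSq (Q * S) := by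
  unfold frobSq
  rw [Matrix.conjTranspose_mul, hQ, hS]
  refine congrArg Complex.re ?_
  have h1 : S * Q * (Q * S) = S * (Q * S) := by
    rw [Matrix.mul_assoc S Q, ← Matrix.mul_assoc Q Q, hQQ]
  rw [h1]
  conv_rhs => rw [Matrix.trace_mul_comm]
  conv_rhs => rw [Matrix.mul_assoc]

lemma cross_bound {W P Q S : Matrix (Fin d) (Fin d) ℂ} (hW : W * Wᴴ = 1)
    (hP : Pᴴ = P) (hPP : P * P = P) (hQ : Qᴴ = Q) (hQQ : Q * Q = Q) (hS : Sᴴ = S) :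
    |((W * (Q * (S * S) * P)).trace).re| ≤
      Real.sqrt (((P * (S * S)).trace).re) * Real.sqrt (((Q * (S * S)).trace).re) := by
  have key : (W * (Q * (S * S) * P)).trace = ((Wᴴ * (P * S))ᴴ * (Q * S)).trace := by
    simp only [Matrix.conjTranspose_mul, Matrix.conjTranspose_conjTranspose, hP, hS,
      Matrix.mul_assoc]
    conv_rhs => rw [Matrix.trace_mul_comm]
    simp only [Matrix.mul_assoc]
    conv_rhs => rw [Matrix.trace_mul_comm]
    simp only [Matrix.mul_assoc]
  have hfrob1 : frobSq (Wᴴ * (P * S)) = ((P * (S * S)).trace).re := by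
    unfold frobSq
    simp only [Matrix.conjTranspose_mul, Matrix.conjTranspose_conjTranspose, hP, hS,
      Matrix.mul_assoc]
    rw [← Matrix.mul_assoc W Wᴴ, hW, Matrix.one_mul, ← Matrix.mul_assoc P P, hPP]
    refine congrArg Complex.re ?_
    rw [Matrix.trace_mul_comm, Matrix.mul_assoc]
  have hfrob2 : frobSq (Q * S) = ((Q * (S * S)).trace).re := (proj_trace_frob hQ hQQ hS).symm
  calc |((W * (Q * (S * S) * P)).trace).re|
      = |(((Wᴴ * (P * S))ᴴ * (Q * S)).trace).re| := by rw [key]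
    _ ≤ Real.sqrt (frobSq (Wᴴ * (P * S))) * Real.sqrt (frobSq (Q * S)) := trace_CS _ _
    _ = _ := by rw [hfrob1, hfrob2]

lemma proj_psd {Q S : Matrix (Fin d) (Fin d) ℂ} (hQ : Qᴴ = Q) (hS : Sᴴ = S) :
    (Q * (S * S) * Q).PosSemidef := by
  have h : Q * (S * S) * Q = (Q * S) * (Q * S)ᴴ := by
    rw [Matrix.conjTranspose_mul, hQ, hS]
    simp only [Matrix.mul_assoc]
  rw [h]
  exact Matrix.posSemidef_self_mul_conjTranspose _

lemma conj_trace {Q S : Matrix (Fin d) (Fin d) ℂ} (hQQ : Q * Q = Q) :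
    (Q * (S * S) * Q).trace = (Q * (S * S)).trace := by
  rw [Matrix.trace_mul_cycle, hQQ]

end MainAux

/-- There is a universal constant `C` such that: if `X` is Hermitian with `‖X‖₁ ≤ 1`
and `Tr(X⁻) ≤ δ`, and `P` is an orthogonal projection with `Tr(PX) ≥ ‖X‖₁ - δ`,
for some `0 ≤ δ ≤ 1`, then `‖PXP - X‖₁ ≤ C √δ`. -/
theorem nucNorm_compress_le : ∃ C : ℝ, 0 < C ∧
    ∀ (d : ℕ) (X P : Matrix (Fin d) (Fin d) ℂ) (hX : X.IsHermitian)
      (δ : ℝ), 0 ≤ δ → δ ≤ 1 →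
      Pᴴ = P → P * P = P →
      nucNorm X ≤ 1 →
      (negPart hX).trace.re ≤ δ →
      nucNorm X - δ ≤ (P * X).trace.re →
      nucNorm (P * X * P - X) ≤ C * Real.sqrt δ := by
  refine ⟨6, by norm_num, ?_⟩
  intro d X P hX δ hδ0 hδ1 hP hPP hnuc hneg htr
  set Q : Matrix (Fin d) (Fin d) ℂ := 1 - P with hQdef
  have hQ : Qᴴ = Q := by
    rw [hQdef, Matrix.conjTranspose_sub, hP, Matrix.conjTranspose_one]
  have hQQ : Q * Q = Q := by
    rw [hQdef, Matrix.sub_mul, Matrix.one_mul, Matrix.mul_sub, Matrix.mul_one, hPP]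
    abel
  set S := conjDiag hX (fun i => Real.sqrt (max (hX.eigenvalues i) 0)) with hSdef
  set T := conjDiag hX (fun i => Real.sqrt (max (-hX.eigenvalues i) 0)) with hTdef
  have hS : Sᴴ = S := conjDiag_conjTranspose hX _
  have hT : Tᴴ = T := conjDiag_conjTranspose hX _
  have hSS : S * S = posPart hX := by
    rw [hSdef, conjDiag_mul, posPart_eq]
    exact congrArg _ (funext fun i => Real.mul_self_sqrt (le_max_right _ _))
  have hTT : T * T = negPart hX := by
    rw [hTdef, conjDiag_mul, negPart_eq]
    exact congrArg _ (funext fun i => Real.mul_self_sqrt (le_max_right _ _))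
  set pp := ((P * (S * S)).trace).re with hppdef
  set qp := ((Q * (S * S)).trace).re with hqpdef
  set pn := ((P * (T * T)).trace).re with hpndef
  set qn := ((Q * (T * T)).trace).re with hqndef
  have hpp0 : 0 ≤ pp := by rw [hppdef, proj_trace_frob hP hPP hS]; exact frobSq_nonneg _
  have hqp0 : 0 ≤ qp := by rw [hqpdef, proj_trace_frob hQ hQQ hS]; exact frobSq_nonneg _
  have hpn0 : 0 ≤ pn := by rw [hpndef, proj_trace_frob hP hPP hT]; exact frobSq_nonneg _
  have hqn0 : 0 ≤ qn := by rw [hqndef, proj_trace_frob hQ hQQ hT]; exact frobSq_nonneg _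
  have hsum_p : pp + qp = (posPart hX).trace.re := by
    rw [hppdef, hqpdef, hQdef, Matrix.sub_mul, Matrix.one_mul, Matrix.trace_sub,
      Complex.sub_re, hSS]
    ring
  have hsum_n : pn + qn = (negPart hX).trace.re := by
    rw [hpndef, hqndef, hQdef, Matrix.sub_mul, Matrix.one_mul, Matrix.trace_sub,
      Complex.sub_re, hTT]
    ring
  have hXdec : X = S * S - T * T := by rw [hSS, hTT]; exact X_decomp hX
  have hnucX : nucNorm X = (posPart hX).trace.re + (negPart hX).trace.re := nucNorm_X_split hX
  have htrP : ((P * X).trace).re = pp - pn := by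
    have h : P * X = P * (S * S) - P * (T * T) := by
      conv_lhs => rw [hXdec]
      rw [Matrix.mul_sub]
    rw [h, Matrix.trace_sub, Complex.sub_re]
  have hqp_le : qp ≤ δ := by
    rw [htrP] at htr
    rw [hnucX, ← hsum_p, ← hsum_n] at htr
    linarith
  have hpp1 : pp ≤ 1 := by
    rw [hnucX, ← hsum_p, ← hsum_n] at hnuc
    linarith
  have hpn_le : pn ≤ δ := by rw [← hsum_n] at hneg; linarith
  have hqn_le : qn ≤ δ := by rw [← hsum_n] at hneg; linarith
  -- decomposition of the error matrix
  have hdec : P * X * P - X = -(Q * X * Q + (Q * X * P + P * X * Q)) := by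
    rw [hQdef]; noncomm_ring
  rw [hdec, nucNorm_neg]
  have hXh : Xᴴ = X := hX
  have h1 : (Q * X * Q).IsHermitian := by
    show (Q * X * Q)ᴴ = Q * X * Q
    simp only [Matrix.conjTranspose_mul, hQ, hXh, Matrix.mul_assoc]
  have h2 : (Q * X * P + P * X * Q).IsHermitian := by
    show (Q * X * P + P * X * Q)ᴴ = _
    simp only [Matrix.conjTranspose_add, Matrix.conjTranspose_mul, hQ, hP, hXh,
      Matrix.mul_assoc]
    abel
  -- bound for the corner term
  have hcorner : nucNorm (Q * X * Q) ≤ qp + qn := by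
    have hsplit : Q * X * Q = Q * (S * S) * Q + -(Q * (T * T) * Q) := by
      conv_lhs => rw [hXdec]
      noncomm_ring
    rw [hsplit]
    have e1 : nucNorm (Q * (S * S) * Q) = qp := by
      rw [nucNorm_psd (proj_psd hQ hS), conj_trace hQQ]
    have e2 : nucNorm (-(Q * (T * T) * Q)) = qn := by
      rw [nucNorm_neg, nucNorm_psd (proj_psd hQ hT), conj_trace hQQ]
    calc nucNorm (Q * (S * S) * Q + -(Q * (T * T) * Q))
        ≤ nucNorm (Q * (S * S) * Q) + nucNorm (-(Q * (T * T) * Q)) :=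
          nucNorm_add_le (proj_psd hQ hS).1 (proj_psd hQ hT).1.neg
      _ = qp + qn := by rw [e1, e2]
  -- bound for the cross term
  have hcross : nucNorm (Q * X * P + P * X * Q) ≤
      2 * (Real.sqrt pp * Real.sqrt qp) + 2 * (Real.sqrt pn * Real.sqrt qn) := by
    obtain ⟨W, hW1, hW2, hval⟩ := exists_sign_unitary h2
    rw [hval, Matrix.mul_add, Matrix.trace_add, Complex.add_re]
    have hterm1 : ((W * (Q * X * P)).trace).re ≤
        Real.sqrt pp * Real.sqrt qp + Real.sqrt pn * Real.sqrt qn := by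
      have hsplit : W * (Q * X * P) = W * (Q * (S * S) * P) - W * (Q * (T * T) * P) := by
        conv_lhs => rw [hXdec]
        noncomm_ring
      rw [hsplit, Matrix.trace_sub, Complex.sub_re]
      have b1 := cross_bound hW1 hP hPP hQ hQQ hS
      have b2 := cross_bound hW1 hP hPP hQ hQQ hT
      rw [← hppdef, ← hqpdef] at b1
      rw [← hpndef, ← hqndef] at b2
      have := abs_le.mp b1
      have := abs_le.mp b2
      linarith [(abs_le.mp b1).2, (abs_le.mp b2).1]
    have hterm2 : ((W * (P * X * Q)).trace).re ≤
        Real.sqrt pp * Real.sqrt qp + Real.sqrt pn * Real.sqrt qn := by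
      have hsplit : W * (P * X * Q) = W * (P * (S * S) * Q) - W * (P * (T * T) * Q) := by
        conv_lhs => rw [hXdec]
        noncomm_ring
      rw [hsplit, Matrix.trace_sub, Complex.sub_re]
      have b1 := cross_bound hW1 hQ hQQ hP hPP hS
      have b2 := cross_bound hW1 hQ hQQ hP hPP hT
      rw [← hppdef, ← hqpdef] at b1
      rw [← hpndef, ← hqndef] at b2
      have e1 : Real.sqrt qp * Real.sqrt pp = Real.sqrt pp * Real.sqrt qp := mul_comm _ _
      have e2 : Real.sqrt qn * Real.sqrt pn = Real.sqrt pn * Real.sqrt qn := mul_comm _ _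
      rw [e1] at b1
      rw [e2] at b2
      linarith [(abs_le.mp b1).2, (abs_le.mp b2).1]
    linarith
  -- numeric endgame
  have hsqpp : Real.sqrt pp ≤ 1 := by
    rw [show (1:ℝ) = Real.sqrt 1 from (Real.sqrt_one).symm]
    exact Real.sqrt_le_sqrt hpp1
  have hsqqp : Real.sqrt qp ≤ Real.sqrt δ := Real.sqrt_le_sqrt hqp_le
  have hsqpn : Real.sqrt pn ≤ Real.sqrt δ := Real.sqrt_le_sqrt hpn_le
  have hsqqn : Real.sqrt qn ≤ Real.sqrt δ := Real.sqrt_le_sqrt hqn_le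
  have hsqδ : Real.sqrt δ * Real.sqrt δ = δ := Real.mul_self_sqrt hδ0
  have hδsq : δ ≤ Real.sqrt δ := by
    nlinarith [Real.sqrt_nonneg δ, Real.sqrt_le_one.mpr hδ1]
  have hsq0 : 0 ≤ Real.sqrt δ := Real.sqrt_nonneg δ
  calc nucNorm (Q * X * Q + (Q * X * P + P * X * Q))
      ≤ nucNorm (Q * X * Q) + nucNorm (Q * X * P + P * X * Q) := nucNorm_add_le h1 h2
    _ ≤ (qp + qn) + (2 * (Real.sqrt pp * Real.sqrt qp) + 2 * (Real.sqrt pn * Real.sqrt qn)) :=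
        add_le_add hcorner hcross
    _ ≤ 6 * Real.sqrt δ := by
        have c1 : Real.sqrt pp * Real.sqrt qp ≤ Real.sqrt δ := by
          calc Real.sqrt pp * Real.sqrt qp ≤ 1 * Real.sqrt qp :=
                mul_le_mul_of_nonneg_right hsqpp (Real.sqrt_nonneg _)
            _ = Real.sqrt qp := one_mul _
            _ ≤ Real.sqrt δ := hsqqp
        have c2 : Real.sqrt pn * Real.sqrt qn ≤ δ := by
          calc Real.sqrt pn * Real.sqrt qn ≤ Real.sqrt δ * Real.sqrt δ := by
                exact mul_le_mul hsqpn hsqqn (Real.sqrt_nonneg _) hsq0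
            _ = δ := hsqδ
        have c3 : qp ≤ Real.sqrt δ := hqp_le.trans hδsq
        have c4 : qn ≤ Real.sqrt δ := hqn_le.trans hδsq
        linarith
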